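/- Let γ ∈ SL₂(ℂ) \ SU₂(ℂ) with Ψ(γ) = [[A, C′],[C, A′]]. Then the center P = −C⁻¹A′ of the isometric sphere of Ψ(γ) satisfies ‖P‖² = (2 + ‖γ‖²)/(‖γ‖² − 2), and the radius R = 1/|C| satisfies R² = 4/(‖γ‖² − 2). -/

import Mathlib

open scoped Quaternion
open Matrix

/-- Embedding of `ℂ` into the real quaternions `ℍ`. -/
noncomputable def toQ (z : ℂ) : ℍ[ℝ] := ⟨z.re, z.im, 0, 0⟩

/-- The quaternion `j`. -/
noncomputable def jq : ℍ[ℝ] := ⟨0, 0, 1, 0⟩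

/-- The map `Ψ(γ) = ḡ γ g` where `g = (1/√2)[[1,j],[j,1]]`. -/
noncomputable def Ψ (γ : Matrix (Fin 2) (Fin 2) ℂ) : Matrix (Fin 2) (Fin 2) ℍ[ℝ] :=
  ((Real.sqrt 2)⁻¹ • !![(1 : ℍ[ℝ]), -jq; -jq, 1]) * (γ.map toQ) *
    ((Real.sqrt 2)⁻¹ • !![(1 : ℍ[ℝ]), jq; jq, 1])

/-- `‖γ‖²`, the sum of the squared moduli of the entries of `γ`. -/
noncomputable def mnorm (γ : Matrix (Fin 2) (Fin 2) ℂ) : ℝ :=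
  Complex.normSq (γ 0 0) + Complex.normSq (γ 0 1) + Complex.normSq (γ 1 0) + Complex.normSq (γ 1 1)

lemma psi_entry_C (γ : Matrix (Fin 2) (Fin 2) ℂ) :
    Ψ γ 1 0 = (⟨((γ 1 0).re + (γ 0 1).re)/2, ((γ 1 0).im - (γ 0 1).im)/2,
      ((γ 1 1).re - (γ 0 0).re)/2, ((γ 1 1).im + (γ 0 0).im)/2⟩ : ℍ[ℝ]) := by
  have h2 : (Real.sqrt 2)⁻¹ * (Real.sqrt 2)⁻¹ = 2⁻¹ := by
    rw [← mul_inv]; rw [Real.mul_self_sqrt (by norm_num)]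
  have hj : jq.re = 0 ∧ jq.imI = 0 ∧ jq.imJ = 1 ∧ jq.imK = 0 := ⟨rfl, rfl, rfl, rfl⟩
  have ht : ∀ z : ℂ, (toQ z).re = z.re ∧ (toQ z).imI = z.im ∧ (toQ z).imJ = 0 ∧ (toQ z).imK = 0 :=
    fun _ => ⟨rfl, rfl, rfl, rfl⟩
  ext <;>
  simp [Ψ, Matrix.mul_apply, Matrix.vecMul, dotProduct, Fin.sum_univ_two, ht, hj,
    Quaternion.re_mul, Quaternion.imI_mul, Quaternion.imJ_mul, Quaternion.imK_mul] <;>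
  ring_nf <;>
  rw [show ((Real.sqrt 2)⁻¹)^2 = (Real.sqrt 2)⁻¹ * (Real.sqrt 2)⁻¹ from sq _, h2] <;> ring

lemma psi_entry_A' (γ : Matrix (Fin 2) (Fin 2) ℂ) :
    Ψ γ 1 1 = (⟨((γ 0 0).re + (γ 1 1).re)/2, ((γ 1 1).im - (γ 0 0).im)/2,
      ((γ 1 0).re - (γ 0 1).re)/2, ((γ 1 0).im + (γ 0 1).im)/2⟩ : ℍ[ℝ]) := by
  have h2 : (Real.sqrt 2)⁻¹ * (Real.sqrt 2)⁻¹ = 2⁻¹ := by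
    rw [← mul_inv]; rw [Real.mul_self_sqrt (by norm_num)]
  have hj : jq.re = 0 ∧ jq.imI = 0 ∧ jq.imJ = 1 ∧ jq.imK = 0 := ⟨rfl, rfl, rfl, rfl⟩
  have ht : ∀ z : ℂ, (toQ z).re = z.re ∧ (toQ z).imI = z.im ∧ (toQ z).imJ = 0 ∧ (toQ z).imK = 0 :=
    fun _ => ⟨rfl, rfl, rfl, rfl⟩
  ext <;>
  simp [Ψ, Matrix.mul_apply, Matrix.vecMul, dotProduct, Fin.sum_univ_two, ht, hj,
    Quaternion.re_mul, Quaternion.imI_mul, Quaternion.imJ_mul, Quaternion.imK_mul] <;>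
  ring_nf <;>
  rw [show ((Real.sqrt 2)⁻¹)^2 = (Real.sqrt 2)⁻¹ * (Real.sqrt 2)⁻¹ from sq _, h2] <;> ring


/-- For `γ ∈ SL₂(ℂ) \ SU₂(ℂ)` with `Ψ(γ) = [[A, C′],[C, A′]]`, the center `P = −C⁻¹A′` of the
isometric sphere of `Ψ(γ)` satisfies `‖P‖² = (2 + ‖γ‖²)/(‖γ‖² − 2)`, and the radius `R = 1/|C|`
satisfies `R² = 4/(‖γ‖² − 2)`. -/
theorem stmt5 (γ : Matrix (Fin 2) (Fin 2) ℂ) (hdet : γ.det = 1) (hsu : mnorm γ ≠ 2) :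
    Quaternion.normSq (-(Ψ γ 1 0)⁻¹ * Ψ γ 1 1) = (2 + mnorm γ) / (mnorm γ - 2) ∧
    (Quaternion.normSq (Ψ γ 1 0))⁻¹ = 4 / (mnorm γ - 2) := by
  have hd : γ.det = γ 0 0 * γ 1 1 - γ 0 1 * γ 1 0 := by
    simp [Matrix.det_fin_two]
  rw [hd] at hdet
  have hre : (γ 0 0 * γ 1 1 - γ 0 1 * γ 1 0).re = 1 := by rw [hdet]; simp
  have him : (γ 0 0 * γ 1 1 - γ 0 1 * γ 1 0).im = 0 := by rw [hdet]; simp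
  simp only [Complex.sub_re, Complex.sub_im, Complex.mul_re, Complex.mul_im] at hre him
  have hC : Quaternion.normSq (Ψ γ 1 0) = (mnorm γ - 2) / 4 := by
    rw [Quaternion.normSq_def', psi_entry_C]
    simp only [Quaternion.normSq_def', mnorm, Complex.normSq_apply]
    nlinarith [hre]
  have hA : Quaternion.normSq (Ψ γ 1 1) = (mnorm γ + 2) / 4 := by
    rw [Quaternion.normSq_def', psi_entry_A']
    simp only [Quaternion.normSq_def', mnorm, Complex.normSq_apply]
    nlinarith [hre]
  have hm2 : mnorm γ - 2 ≠ 0 := sub_ne_zero.mpr hsu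
  constructor
  · rw [_root_.map_mul, neg_inv, map_inv₀, Quaternion.normSq_neg, hC, hA]
    field_simp
    ring
  · rw [hC]
    field_simp
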